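/- Let a > 0. The pushforward of the uniform probability measure on (0,1)² under the map (u, u') ↦ √a · sin(2π u') · √( u^{−2/a} − 1 ) is the Student-t distribution with parameter a, i.e., the probability measure on ℝ with density x ↦ 1/( B(a/2, 1/2)·√a·(1 + x²/a)^{(a+1)/2} ), where B denotes the Beta function. -/

import Mathlib

open Real MeasureTheory

open Set
open scoped ENNReal

namespace Stmt19

lemma lint_image {s : Set ℝ} {f f' : ℝ → ℝ} (hs : MeasurableSet s)
    (hf' : ∀ x ∈ s, HasDerivWithinAt f (f' x) s x) (hf : Set.InjOn f s) (g : ℝ → ℝ≥0∞) :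
    ∫⁻ x in f '' s, g x = ∫⁻ x in s, ENNReal.ofReal (|f' x|) * g (f x) := by
  simpa only [ContinuousLinearMap.det_toSpanSingleton] using
    MeasureTheory.lintegral_image_eq_lintegral_abs_det_fderiv_mul volume hs
      (fun x hx => (hf' x hx).hasFDerivWithinAt) hf g

lemma real_beta {p q : ℝ} (hp : 0 < p) (hq : 0 < q) :
    ∫ y in (0:ℝ)..1, y ^ (p - 1) * (1 - y) ^ (q - 1)
      = Real.Gamma p * Real.Gamma q / Real.Gamma (p + q) := by
  have h := Complex.Gamma_mul_Gamma_eq_betaIntegral (s := (p:ℂ)) (t := (q:ℂ))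
    (by simpa using hp) (by simpa using hq)
  have hcongr : Complex.betaIntegral (p:ℂ) (q:ℂ)
      = ((∫ y in (0:ℝ)..1, y ^ (p - 1) * (1 - y) ^ (q - 1) : ℝ) : ℂ) := by
    rw [Complex.betaIntegral, ← intervalIntegral.integral_ofReal]
    apply intervalIntegral.integral_congr
    intro x hx
    rw [Set.uIcc_of_le (by norm_num : (0:ℝ) ≤ 1)] at hx
    push_cast
    rw [Complex.ofReal_cpow hx.1, Complex.ofReal_cpow (by linarith [hx.2] : (0:ℝ) ≤ 1 - x)]
    push_cast
    ring
  have hne : Real.Gamma (p + q) ≠ 0 := (Real.Gamma_pos_of_pos (by linarith)).ne'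
  rw [hcongr, ← Complex.ofReal_add, Complex.Gamma_ofReal, Complex.Gamma_ofReal,
      Complex.Gamma_ofReal, ← Complex.ofReal_mul, ← Complex.ofReal_mul] at h
  have h2 := Complex.ofReal_injective h
  rw [eq_div_iff hne]
  linarith [h2]

lemma beta_integrableOn {p q : ℝ} (hp : 0 < p) (hq : 0 < q) :
    IntegrableOn (fun y : ℝ => y ^ (p - 1) * (1 - y) ^ (q - 1)) (Set.Ioo (0:ℝ) 1) := by
  have h := Complex.betaIntegral_convergent (u := (p:ℂ)) (v := (q:ℂ))
    (by simpa using hp) (by simpa using hq)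
  have h2 : IntegrableOn (fun x : ℝ => (x:ℂ) ^ ((p:ℂ) - 1) * (1 - (x:ℂ)) ^ ((q:ℂ) - 1))
      (Set.Ioc (0:ℝ) 1) := by
    simpa [intervalIntegrable_iff, Set.uIoc_of_le (zero_le_one' ℝ)] using h
  have h3 : IntegrableOn (fun x : ℝ => ((x:ℂ) ^ ((p:ℂ) - 1) * (1 - (x:ℂ)) ^ ((q:ℂ) - 1)).re)
      (Set.Ioc (0:ℝ) 1) := h2.re
  have h4 : IntegrableOn (fun y : ℝ => y ^ (p - 1) * (1 - y) ^ (q - 1)) (Set.Ioc (0:ℝ) 1) := by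
    apply h3.congr_fun _ measurableSet_Ioc
    intro x hx
    have h5 : ((x:ℂ) ^ ((p:ℂ) - 1) * (1 - (x:ℂ)) ^ ((q:ℂ) - 1))
        = ((x ^ (p - 1) * (1 - x) ^ (q - 1) : ℝ) : ℂ) := by
      push_cast
      rw [Complex.ofReal_cpow hx.1.le, Complex.ofReal_cpow (by linarith [hx.2] : (0:ℝ) ≤ 1 - x)]
      push_cast
      ring
    simp only [h5, Complex.ofReal_re]
  exact h4.mono_set Set.Ioo_subset_Ioc_self

lemma lint_one_add_sq (a : ℝ) (ha : 0 < a) :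
    ∫⁻ u : ℝ, ENNReal.ofReal ((1 + u ^ 2) ^ (-(a/2) - 1))
      = ENNReal.ofReal (Real.Gamma ((a+1)/2) * Real.Gamma (1/2) / Real.Gamma (a/2 + 1)) := by
  have hGpos : (0:ℝ) < Real.Gamma ((a+1)/2) * Real.Gamma (1/2) / Real.Gamma (a/2 + 1) :=
    div_pos (mul_pos (Real.Gamma_pos_of_pos (by linarith)) (Real.Gamma_pos_of_pos (by norm_num)))
      (Real.Gamma_pos_of_pos (by linarith))
  set V : ℝ := Real.Gamma ((a+1)/2) * Real.Gamma (1/2) / Real.Gamma (a/2 + 1) with hV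
  have hIoi : ∫⁻ u in Set.Ioi (0:ℝ), ENNReal.ofReal ((1 + u ^ 2) ^ (-(a/2) - 1))
      = ENNReal.ofReal ((1/2) * V) := by
    set ρ : ℝ → ℝ := fun y => Real.sqrt (y⁻¹ - 1) with hρ
    set ρd : ℝ → ℝ := fun y => 1 / (2 * Real.sqrt (y⁻¹ - 1)) * (-(y ^ 2)⁻¹) with hρd
    have hpos : ∀ y ∈ Set.Ioo (0:ℝ) 1, (0:ℝ) < y⁻¹ - 1 := by
      intro y hy
      rw [sub_pos]
      exact (one_lt_inv_iff₀).mpr ⟨hy.1, hy.2⟩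
    have hinv : ∀ y ∈ Set.Ioo (0:ℝ) 1, (1 + (ρ y) ^ 2)⁻¹ = y := by
      intro y hy
      rw [hρ]
      simp only [Real.sq_sqrt (hpos y hy).le]
      have : (1 : ℝ) + (y⁻¹ - 1) = y⁻¹ := by ring
      rw [this, inv_inv]
    have himg : ρ '' Set.Ioo 0 1 = Set.Ioi (0:ℝ) := by
      ext u
      constructor
      · rintro ⟨y, hy, rfl⟩
        exact Real.sqrt_pos.mpr (hpos y hy)
      · intro hu
        have hu' : (0:ℝ) < u := hu
        refine ⟨(1 + u ^ 2)⁻¹, ⟨by positivity, ?_⟩, ?_⟩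
        · rw [inv_lt_one_iff₀]
          right; nlinarith
        · have h2 : ((1 + u ^ 2)⁻¹)⁻¹ - 1 = u ^ 2 := by
            rw [inv_inv]; ring
          show Real.sqrt (((1 + u ^ 2)⁻¹)⁻¹ - 1) = u
          rw [h2, Real.sqrt_sq hu'.le]
    have hinj : Set.InjOn ρ (Set.Ioo 0 1) := by
      intro y hy z hz h
      have h2 := hinv y hy
      rw [h, hinv z hz] at h2
      exact h2.symm
    have hder : ∀ y ∈ Set.Ioo (0:ℝ) 1, HasDerivWithinAt ρ (ρd y) (Set.Ioo 0 1) y := by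
      intro y hy
      have hy0 : y ≠ 0 := hy.1.ne'
      have hin : HasDerivAt (fun y : ℝ => y⁻¹ - 1) (-(y ^ 2)⁻¹) y :=
        (hasDerivAt_inv hy0).sub_const 1
      exact ((Real.hasDerivAt_sqrt (hpos y hy).ne').comp y hin).hasDerivWithinAt
    rw [← himg, lint_image measurableSet_Ioo hder hinj]
    have hpt : ∀ y ∈ Set.Ioo (0:ℝ) 1,
        ENNReal.ofReal (|ρd y|) * ENNReal.ofReal ((1 + (ρ y) ^ 2) ^ (-(a/2) - 1))
          = ENNReal.ofReal ((1/2) * (y ^ ((a+1)/2 - 1) * (1 - y) ^ ((1:ℝ)/2 - 1))) := by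
      intro y hy
      have hy0 : (0:ℝ) < y := hy.1
      have h1y : (0:ℝ) < 1 - y := by linarith [hy.2]
      have hS : (0:ℝ) < Real.sqrt (y⁻¹ - 1) := Real.sqrt_pos.mpr (hpos y hy)
      rw [← ENNReal.ofReal_mul (abs_nonneg _)]
      congr 1
      have e1 : (1 + (ρ y) ^ 2) ^ (-(a/2) - 1) = y ^ (a/2 + 1) := by
        have hbase : 1 + (ρ y) ^ 2 = y⁻¹ := by
          rw [hρ]; simp only [Real.sq_sqrt (hpos y hy).le]; ring
        rw [hbase, Real.inv_rpow hy0.le, ← Real.rpow_neg hy0.le]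
        congr 1
        ring
      have hsq : Real.sqrt (y⁻¹ - 1) = Real.sqrt (1 - y) / Real.sqrt y := by
        rw [← Real.sqrt_div h1y.le]
        congr 1
        field_simp
      have e3 : y ^ ((a+1)/2 - 1) = y ^ (a/2 + 1) * (y ^ 2)⁻¹ * Real.sqrt y := by
        rw [Real.sqrt_eq_rpow, ← Real.rpow_natCast y 2, ← Real.rpow_neg hy0.le,
          ← Real.rpow_add hy0, ← Real.rpow_add hy0]
        congr 1
        push_cast
        ring
      have e4 : (1 - y) ^ ((1:ℝ)/2 - 1) = (Real.sqrt (1 - y))⁻¹ := by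
        rw [Real.sqrt_eq_rpow, ← Real.rpow_neg h1y.le]
        norm_num
      have e2 : |ρd y| = 1 / (2 * Real.sqrt (y⁻¹ - 1)) * (y ^ 2)⁻¹ := by
        rw [hρd, abs_mul, abs_neg, abs_inv, abs_of_pos (by positivity : (0:ℝ) < y ^ 2),
          abs_of_pos (by positivity : (0:ℝ) < 1 / (2 * Real.sqrt (y⁻¹ - 1)))]
      rw [e2, e1, e3, e4, hsq]
      have hSy : (0:ℝ) < Real.sqrt y := Real.sqrt_pos.mpr hy0
      have hS1 : (0:ℝ) < Real.sqrt (1 - y) := Real.sqrt_pos.mpr h1y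
      field_simp
    rw [lintegral_congr_ae ((ae_restrict_mem measurableSet_Ioo).mono hpt)]
    have hp : (0:ℝ) < (a+1)/2 := by linarith
    have hq : (0:ℝ) < (1:ℝ)/2 := by norm_num
    have hint : IntegrableOn
        (fun y : ℝ => (1/2) * (y ^ ((a+1)/2 - 1) * (1 - y) ^ ((1:ℝ)/2 - 1)))
        (Set.Ioo (0:ℝ) 1) := (beta_integrableOn hp hq).const_mul _
    have hnn : 0 ≤ᵐ[volume.restrict (Set.Ioo (0:ℝ) 1)]
        (fun y : ℝ => (1/2) * (y ^ ((a+1)/2 - 1) * (1 - y) ^ ((1:ℝ)/2 - 1))) :=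
      (ae_restrict_mem measurableSet_Ioo).mono fun y hy => by
        have h1 : (0:ℝ) < y := hy.1
        have h2 : (0:ℝ) < 1 - y := by linarith [hy.2]
        positivity
    rw [← ofReal_integral_eq_lintegral_ofReal hint hnn]
    congr 1
    rw [MeasureTheory.integral_const_mul, ← MeasureTheory.integral_Ioc_eq_integral_Ioo,
      ← intervalIntegral.integral_of_le zero_le_one, real_beta hp hq]
    rw [show (a+1)/2 + 1/2 = a/2 + 1 by ring]
  have hIio : ∫⁻ u in Set.Iio (0:ℝ), ENNReal.ofReal ((1 + u ^ 2) ^ (-(a/2) - 1))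
      = ENNReal.ofReal ((1/2) * V) := by
    have himg : (fun u : ℝ => -u) '' Set.Ioi 0 = Set.Iio (0:ℝ) := by
      rw [Set.image_neg_eq_neg, Set.neg_Ioi, neg_zero]
    have hder : ∀ u ∈ Set.Ioi (0:ℝ), HasDerivWithinAt (fun u : ℝ => -u) (-1) (Set.Ioi 0) u :=
      fun u _ => (hasDerivAt_neg u).hasDerivWithinAt
    rw [← himg, lint_image measurableSet_Ioi hder neg_injective.injOn]
    simp only [abs_neg, abs_one, ENNReal.ofReal_one, one_mul, neg_sq]
    exact hIoi
  calc ∫⁻ u : ℝ, ENNReal.ofReal ((1 + u ^ 2) ^ (-(a/2) - 1))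
      = (∫⁻ u in Set.Ioi (0:ℝ), ENNReal.ofReal ((1 + u ^ 2) ^ (-(a/2) - 1)))
        + ∫⁻ u in (Set.Ioi (0:ℝ))ᶜ, ENNReal.ofReal ((1 + u ^ 2) ^ (-(a/2) - 1)) :=
        (lintegral_add_compl _ measurableSet_Ioi).symm
    _ = ENNReal.ofReal ((1/2) * V) + ENNReal.ofReal ((1/2) * V) := by
        rw [hIoi, Set.compl_Ioi,
          Measure.restrict_congr_set Iio_ae_eq_Iic.symm, hIio]
    _ = ENNReal.ofReal V := by
        rw [← ENNReal.ofReal_add (by linarith) (by linarith)]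
        congr 1
        ring

lemma lint_c_add_sq (a : ℝ) (ha : 0 < a) (c : ℝ) (hc : 0 < c) :
    ∫⁻ t : ℝ, ENNReal.ofReal ((c + t ^ 2) ^ (-(a/2) - 1))
      = ENNReal.ofReal (Real.sqrt c * c ^ (-(a/2) - 1) *
          (Real.Gamma ((a+1)/2) * Real.Gamma (1/2) / Real.Gamma (a/2 + 1))) := by
  have hsc : (0:ℝ) < Real.sqrt c := Real.sqrt_pos.mpr hc
  have himg : (fun u : ℝ => Real.sqrt c * u) '' Set.univ = Set.univ := by
    apply Set.image_univ_of_surjective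
    intro t
    exact ⟨t / Real.sqrt c, by field_simp⟩
  have hder : ∀ u ∈ Set.univ, HasDerivWithinAt (fun u : ℝ => Real.sqrt c * u)
      (Real.sqrt c) Set.univ u :=
    fun u _ => ((hasDerivAt_id u).const_mul (Real.sqrt c)).hasDerivWithinAt.congr_deriv
      (mul_one _)
  have hinj : Set.InjOn (fun u : ℝ => Real.sqrt c * u) Set.univ :=
    (mul_right_injective₀ hsc.ne').injOn
  rw [← setLIntegral_univ, ← himg, lint_image MeasurableSet.univ hder hinj,
    setLIntegral_univ]
  have hpt : ∀ u : ℝ,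
      ENNReal.ofReal (|Real.sqrt c|) * ENNReal.ofReal ((c + (Real.sqrt c * u) ^ 2) ^ (-(a/2) - 1))
        = ENNReal.ofReal (Real.sqrt c * c ^ (-(a/2) - 1))
          * ENNReal.ofReal ((1 + u ^ 2) ^ (-(a/2) - 1)) := by
    intro u
    rw [← ENNReal.ofReal_mul (abs_nonneg _), ← ENNReal.ofReal_mul (by positivity)]
    congr 1
    have e1 : c + (Real.sqrt c * u) ^ 2 = c * (1 + u ^ 2) := by
      rw [mul_pow, Real.sq_sqrt hc.le]; ring
    rw [e1, Real.mul_rpow hc.le (by positivity), abs_of_pos hsc]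
    ring
  simp only [hpt]
  rw [lintegral_const_mul' _ _ ENNReal.ofReal_ne_top, lint_one_add_sq a ha,
    ← ENNReal.ofReal_mul (by positivity)]

noncomputable def G (a x s : ℝ) : ℝ :=
  if 0 < x * s then |x| / s ^ 2 * (1 + x ^ 2 / (a * s ^ 2)) ^ (-(a / 2) - 1) else 0

lemma inner1 (a : ℝ) (ha : 0 < a) (s : ℝ) (hs : s ≠ 0) (f : ℝ → ℝ≥0∞) :
    ∫⁻ u in Set.Ioo (0:ℝ) 1, f (Real.sqrt a * s * Real.sqrt (u ^ (-2 / a) - 1))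
      = ∫⁻ x, ENNReal.ofReal (G a x s) * f x := by
  have has2 : (0:ℝ) < a * s ^ 2 := by positivity
  set S : Set ℝ := {x : ℝ | 0 < x * s} with hS
  have hSm : MeasurableSet S := measurableSet_lt measurable_const (measurable_id.mul_const s)
  set ψ : ℝ → ℝ := fun x => (1 + x ^ 2 / (a * s ^ 2)) ^ (-(a / 2)) with hψ
  set ψd : ℝ → ℝ := fun x => 2 * x / (a * s ^ 2) * (-(a / 2))
    * (1 + x ^ 2 / (a * s ^ 2)) ^ (-(a / 2) - 1) with hψd
  have hbpos : ∀ x : ℝ, (0:ℝ) < 1 + x ^ 2 / (a * s ^ 2) := fun x => by positivity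
  have hexp : -2 / a * (-(a / 2)) = 1 := by field_simp
  have hexp' : -(a / 2) * (-2 / a) = 1 := by field_simp
  -- the "inverse" identity on S
  have hinv : ∀ x ∈ S, Real.sqrt a * s * Real.sqrt ((ψ x) ^ (-2 / a) - 1) = x := by
    intro x hx
    have hx' : 0 < x * s := hx
    have h1 : (ψ x) ^ (-2 / a) = 1 + x ^ 2 / (a * s ^ 2) := by
      rw [hψ]
      show ((1 + x ^ 2 / (a * s ^ 2)) ^ (-(a / 2))) ^ (-2 / a) = _
      rw [← Real.rpow_mul (hbpos x).le, hexp', Real.rpow_one]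
    rw [h1]
    have h2 : 1 + x ^ 2 / (a * s ^ 2) - 1 = x ^ 2 / (a * s ^ 2) := by ring
    rw [h2, Real.sqrt_div (sq_nonneg x), Real.sqrt_sq_eq_abs, Real.sqrt_mul ha.le,
      Real.sqrt_sq_eq_abs]
    rcases mul_pos_iff.mp hx' with ⟨hx0, hs0⟩ | ⟨hx0, hs0⟩
    · rw [abs_of_pos hx0, abs_of_pos hs0]
      field_simp
    · rw [abs_of_neg hx0, abs_of_neg hs0]
      have hsa : Real.sqrt a ≠ 0 := by positivity
      field_simp
  have hinj : Set.InjOn ψ S := by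
    intro x hx y hy h
    rw [← hinv x hx, ← hinv y hy, h]
  have himg : ψ '' S = Set.Ioo (0:ℝ) 1 := by
    ext u
    constructor
    · rintro ⟨x, hx, rfl⟩
      have hx' : 0 < x * s := hx
      have hx0 : x ≠ 0 := by
        rintro rfl
        simp at hx'
      have h1 : 1 < 1 + x ^ 2 / (a * s ^ 2) := by
        have : (0:ℝ) < x ^ 2 / (a * s ^ 2) := by positivity
        linarith
      constructor
      · exact Real.rpow_pos_of_pos (hbpos x) _
      · exact Real.rpow_lt_one_of_one_lt_of_neg h1 (by linarith : -(a/2) < 0)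
    · intro hu
      have hu0 : (0:ℝ) < u := hu.1
      have hu1 : u < 1 := hu.2
      have hb : 1 < u ^ (-2 / a) :=
        (Real.one_lt_rpow_iff_of_pos hu0).mpr (Or.inr ⟨hu1, div_neg_of_neg_of_pos (by norm_num) ha⟩)
      refine ⟨Real.sqrt a * s * Real.sqrt (u ^ (-2 / a) - 1), ?_, ?_⟩
      · show 0 < Real.sqrt a * s * Real.sqrt (u ^ (-2 / a) - 1) * s
        have h1 : (0:ℝ) < Real.sqrt (u ^ (-2 / a) - 1) := Real.sqrt_pos.mpr (by linarith)
        have h2 : (0:ℝ) < Real.sqrt a := Real.sqrt_pos.mpr ha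
        calc (0:ℝ) < Real.sqrt a * Real.sqrt (u ^ (-2 / a) - 1) * s ^ 2 := by positivity
          _ = Real.sqrt a * s * Real.sqrt (u ^ (-2 / a) - 1) * s := by ring
      · have hsq : (Real.sqrt a * s * Real.sqrt (u ^ (-2 / a) - 1)) ^ 2
            = a * s ^ 2 * (u ^ (-2 / a) - 1) := by
          rw [mul_pow, mul_pow, Real.sq_sqrt ha.le, Real.sq_sqrt (by linarith : (0:ℝ) ≤ u ^ (-2/a) - 1)]
        rw [hψ]
        show (1 + (Real.sqrt a * s * Real.sqrt (u ^ (-2 / a) - 1)) ^ 2 / (a * s ^ 2)) ^ (-(a/2)) = u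
        rw [hsq]
        have h3 : 1 + a * s ^ 2 * (u ^ (-2 / a) - 1) / (a * s ^ 2) = u ^ (-2 / a) := by
          field_simp
          ring
        rw [h3, ← Real.rpow_mul hu0.le, hexp, Real.rpow_one]
  have hder : ∀ x ∈ S, HasDerivWithinAt ψ (ψd x) S x := by
    intro x _
    have hin : HasDerivAt (fun x : ℝ => 1 + x ^ 2 / (a * s ^ 2)) (2 * x / (a * s ^ 2)) x := by
      have := ((hasDerivAt_pow 2 x).div_const (a * s ^ 2)).const_add 1
      simpa using this
    exact (hin.rpow_const (Or.inl (hbpos x).ne')).hasDerivWithinAt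
  calc ∫⁻ u in Set.Ioo (0:ℝ) 1, f (Real.sqrt a * s * Real.sqrt (u ^ (-2 / a) - 1))
      = ∫⁻ u in ψ '' S, f (Real.sqrt a * s * Real.sqrt (u ^ (-2 / a) - 1)) := by rw [himg]
    _ = ∫⁻ x in S, ENNReal.ofReal (|ψd x|)
          * f (Real.sqrt a * s * Real.sqrt ((ψ x) ^ (-2 / a) - 1)) :=
        lint_image hSm hder hinj _
    _ = ∫⁻ x in S, ENNReal.ofReal (G a x s) * f x := by
        apply lintegral_congr_ae
        refine (ae_restrict_mem hSm).mono fun x hx => ?_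
        have hx' : 0 < x * s := hx
        show ENNReal.ofReal (|ψd x|)
          * f (Real.sqrt a * s * Real.sqrt ((ψ x) ^ (-2 / a) - 1))
          = ENNReal.ofReal (G a x s) * f x
        rw [hinv x hx]
        congr 2
        simp only [G, if_pos hx', hψd]
        have hP : (0:ℝ) < (1 + x ^ 2 / (a * s ^ 2)) ^ (-(a / 2) - 1) :=
          Real.rpow_pos_of_pos (hbpos x) _
        rw [abs_mul, abs_mul, abs_of_pos hP, abs_neg,
          abs_of_pos (by linarith : (0:ℝ) < a / 2), abs_div, abs_of_pos has2, abs_mul,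
          show |(2:ℝ)| = 2 by norm_num]
        field_simp
    _ = ∫⁻ x, ENNReal.ofReal (G a x s) * f x := by
        rw [← lintegral_indicator hSm]
        apply lintegral_congr
        intro x
        by_cases hx : x ∈ S
        · rw [Set.indicator_of_mem hx]
        · rw [Set.indicator_of_notMem hx, G, if_neg (by exact hx), ENNReal.ofReal_zero, zero_mul]

lemma Gprod (a : ℝ) (ha : 0 < a) (x : ℝ) (hx : x ≠ 0) (t s : ℝ)
    (h2 : 0 < x * s) (h1 : s ^ 2 = 1 / (1 + (Real.sqrt a / x * t) ^ 2)) :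
    |(-(1 / (1 + (Real.sqrt a / x * t) ^ 2) * (Real.sqrt a / x) / (2 * π)))| * G a x s
      = Real.sqrt a / (2 * π) * (1 + x ^ 2 / a + t ^ 2) ^ (-(a / 2) - 1) := by
  have hD : (0:ℝ) < 1 + (Real.sqrt a / x * t) ^ 2 := by positivity
  have hm2 : (Real.sqrt a / x * t) ^ 2 = a * t ^ 2 / x ^ 2 := by
    rw [mul_pow, div_pow, Real.sq_sqrt ha.le]
    ring
  have hx2 : x ^ 2 ≠ 0 := pow_ne_zero 2 hx
  have key : 1 + x ^ 2 / (a * s ^ 2) = 1 + x ^ 2 / a + t ^ 2 := by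
    rw [h1, hm2]
    field_simp
    ring
  rw [G, if_pos h2, key]
  have habs : |(-(1 / (1 + (Real.sqrt a / x * t) ^ 2) * (Real.sqrt a / x) / (2 * π)))|
      = 1 / (1 + (Real.sqrt a / x * t) ^ 2) * (Real.sqrt a / |x|) / (2 * π) := by
    rw [abs_neg, abs_div, abs_mul,
      abs_of_pos (by positivity : (0:ℝ) < 1 / (1 + (Real.sqrt a / x * t) ^ 2)),
      abs_div, abs_of_nonneg (Real.sqrt_nonneg a),
      abs_of_pos Real.two_pi_pos]
  rw [habs, h1]
  have hax : |x| ≠ 0 := abs_ne_zero.mpr hx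
  have hπ : π ≠ 0 := Real.pi_ne_zero
  field_simp

lemma Hval_pos (a : ℝ) (ha : 0 < a) (x : ℝ) (hx' : 0 < x) :
    ∫⁻ v in Set.Ioo (0:ℝ) 1, ENNReal.ofReal (G a x (Real.sin (2 * π * v)))
      = ENNReal.ofReal (Real.sqrt a / (2 * π))
        * ∫⁻ t : ℝ, ENNReal.ofReal ((1 + x ^ 2 / a + t ^ 2) ^ (-(a / 2) - 1)) := by
  have hx : x ≠ 0 := hx'.ne'
  have hπ : (0:ℝ) < π := Real.pi_pos
  have hsa : (0:ℝ) < Real.sqrt a := Real.sqrt_pos.mpr ha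
  set m : ℝ := Real.sqrt a / x with hm
  have hm0 : m ≠ 0 := by positivity
  set w : ℝ → ℝ := fun t => 1/4 - Real.arctan (m * t) / (2 * π) with hw
  set wd : ℝ → ℝ := fun t => -(1 / (1 + (m * t) ^ 2) * m / (2 * π)) with hwd
  -- split the domain
  have hsplit : Set.Ioo (0:ℝ) 1 = Set.Ioo 0 (1/2) ∪ Set.Ico (1/2) 1 :=
    (Set.Ioo_union_Ico_eq_Ioo (by norm_num) (by norm_num)).symm
  have hdisj : Disjoint (Set.Ioo (0:ℝ) (1/2)) (Set.Ico (1/2:ℝ) 1) := by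
    rw [Set.disjoint_left]
    intro v hv1 hv2
    exact absurd hv2.1 (not_le.mpr hv1.2)
  rw [hsplit, lintegral_union measurableSet_Ico hdisj]
  have hzero : ∫⁻ v in Set.Ico (1/2:ℝ) 1, ENNReal.ofReal (G a x (Real.sin (2 * π * v))) = 0 := by
    rw [lintegral_congr_ae ((ae_restrict_mem measurableSet_Ico).mono
      (fun v hv => ?_)), lintegral_zero]
    show ENNReal.ofReal (G a x (Real.sin (2 * π * v))) = (fun _ => (0:ℝ≥0∞)) v
    have hsle : Real.sin (2 * π * v) ≤ 0 := by
      have h1 : Real.sin (2 * π * v - π) = -Real.sin (2 * π * v) := Real.sin_sub_pi _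
      have h2 : 0 ≤ Real.sin (2 * π * v - π) := by
        apply Real.sin_nonneg_of_nonneg_of_le_pi
        · nlinarith [hv.1]
        · nlinarith [hv.2]
      linarith [h1 ▸ h2]
    have : ¬ (0 < x * Real.sin (2 * π * v)) :=
      not_lt.mpr (mul_nonpos_iff.mpr (Or.inl ⟨hx'.le, hsle⟩))
    simp [G, this]
  rw [hzero, add_zero]
  -- substitution v = w t
  have hbound : ∀ t : ℝ, w t ∈ Set.Ioo (0:ℝ) (1/2) := by
    intro t
    have h1 : Real.arctan (m * t) < π / 2 := Real.arctan_lt_pi_div_two _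
    have h2 : -(π / 2) < Real.arctan (m * t) := Real.neg_pi_div_two_lt_arctan _
    constructor
    · show 0 < 1/4 - Real.arctan (m * t) / (2 * π)
      rw [sub_pos, div_lt_iff₀ Real.two_pi_pos]
      nlinarith
    · show 1/4 - Real.arctan (m * t) / (2 * π) < 1/2
      have h3 : -(1/4 : ℝ) < Real.arctan (m * t) / (2 * π) := by
        rw [lt_div_iff₀ Real.two_pi_pos]
        nlinarith
      linarith
  have himg : w '' Set.univ = Set.Ioo (0:ℝ) (1/2) := by
    ext v
    constructor
    · rintro ⟨t, -, rfl⟩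
      exact hbound t
    · intro hv
      have hsin : 0 < Real.sin (2 * π * v) := by
        apply Real.sin_pos_of_pos_of_lt_pi
        · nlinarith [hv.1]
        · nlinarith [hv.2]
      refine ⟨x * (Real.cos (2 * π * v) / Real.sin (2 * π * v)) / Real.sqrt a, trivial, ?_⟩
      have hmt : m * (x * (Real.cos (2 * π * v) / Real.sin (2 * π * v)) / Real.sqrt a)
          = Real.cos (2 * π * v) / Real.sin (2 * π * v) := by
        rw [hm]
        field_simp
      show 1/4 - Real.arctan (m * (x * (Real.cos (2 * π * v) / Real.sin (2 * π * v)) / Real.sqrt a)) / (2 * π) = v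
      rw [hmt]
      have htan : Real.cos (2 * π * v) / Real.sin (2 * π * v) = Real.tan (π / 2 - 2 * π * v) := by
        rw [Real.tan_pi_div_two_sub, Real.tan_eq_sin_div_cos, inv_div]
      rw [htan, Real.arctan_tan (by nlinarith [hv.2]) (by nlinarith [hv.1])]
      field_simp
      ring
  have hinj : Set.InjOn w Set.univ := by
    intro t1 _ t2 _ h
    have h' : (1/4:ℝ) - Real.arctan (m * t1) / (2 * π)
        = 1/4 - Real.arctan (m * t2) / (2 * π) := h
    have h2 : Real.arctan (m * t1) = Real.arctan (m * t2) := by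
      have h3 : Real.arctan (m * t1) / (2 * π) = Real.arctan (m * t2) / (2 * π) := by
        linarith
      field_simp at h3
      exact h3
    exact mul_left_cancel₀ hm0 (Real.arctan_injective h2)
  have hder : ∀ t ∈ Set.univ, HasDerivWithinAt w (wd t) Set.univ t := by
    intro t _
    have h1 : HasDerivAt (fun t : ℝ => m * t) (m * 1) t := (hasDerivAt_id t).const_mul m
    have h2 := (Real.hasDerivAt_arctan (m * t)).comp t h1
    have h3 := (h2.div_const (2 * π)).const_sub (1/4 : ℝ)
    have h4 : -(1 / (1 + (m * t) ^ 2) * (m * 1) / (2 * π)) = wd t := by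
      rw [hwd]; ring
    exact (h4 ▸ h3).hasDerivWithinAt
  rw [← himg, lint_image MeasurableSet.univ hder hinj, setLIntegral_univ]
  have hpt : ∀ t : ℝ, ENNReal.ofReal (|wd t|) * ENNReal.ofReal (G a x (Real.sin (2 * π * w t)))
      = ENNReal.ofReal (Real.sqrt a / (2 * π) * (1 + x ^ 2 / a + t ^ 2) ^ (-(a / 2) - 1)) := by
    intro t
    have harg : 2 * π * w t = π / 2 - Real.arctan (m * t) := by
      rw [hw]
      show 2 * π * (1/4 - Real.arctan (m * t) / (2 * π)) = _
      field_simp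
      ring
    rw [harg, Real.sin_pi_div_two_sub, ← ENNReal.ofReal_mul (abs_nonneg _)]
    congr 1
    exact Gprod a ha x hx t _ (mul_pos hx' (Real.cos_arctan_pos _)) (Real.cos_sq_arctan _)
  simp only [hpt]
  simp only [ENNReal.ofReal_mul (by positivity : (0:ℝ) ≤ Real.sqrt a / (2 * π))]
  rw [lintegral_const_mul' _ _ ENNReal.ofReal_ne_top]

lemma Hval_neg (a : ℝ) (ha : 0 < a) (x : ℝ) (hx' : x < 0) :
    ∫⁻ v in Set.Ioo (0:ℝ) 1, ENNReal.ofReal (G a x (Real.sin (2 * π * v)))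
      = ENNReal.ofReal (Real.sqrt a / (2 * π))
        * ∫⁻ t : ℝ, ENNReal.ofReal ((1 + x ^ 2 / a + t ^ 2) ^ (-(a / 2) - 1)) := by
  have hx : x ≠ 0 := hx'.ne
  have hπ : (0:ℝ) < π := Real.pi_pos
  have hsa : (0:ℝ) < Real.sqrt a := Real.sqrt_pos.mpr ha
  set m : ℝ := Real.sqrt a / x with hm
  have hm0 : m ≠ 0 := div_ne_zero hsa.ne' hx
  set w : ℝ → ℝ := fun t => 3/4 - Real.arctan (m * t) / (2 * π) with hw
  set wd : ℝ → ℝ := fun t => -(1 / (1 + (m * t) ^ 2) * m / (2 * π)) with hwd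
  have hsplit : Set.Ioo (0:ℝ) 1 = Set.Ioc 0 (1/2) ∪ Set.Ioo (1/2) 1 :=
    (Set.Ioc_union_Ioo_eq_Ioo (by norm_num) (by norm_num)).symm
  have hdisj : Disjoint (Set.Ioc (0:ℝ) (1/2)) (Set.Ioo (1/2:ℝ) 1) := by
    rw [Set.disjoint_left]
    intro v hv1 hv2
    exact absurd hv1.2 (not_le.mpr hv2.1)
  rw [hsplit, lintegral_union measurableSet_Ioo hdisj]
  have hzero : ∫⁻ v in Set.Ioc (0:ℝ) (1/2), ENNReal.ofReal (G a x (Real.sin (2 * π * v))) = 0 := by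
    rw [lintegral_congr_ae ((ae_restrict_mem measurableSet_Ioc).mono
      (fun v hv => ?_)), lintegral_zero]
    show ENNReal.ofReal (G a x (Real.sin (2 * π * v))) = (fun _ => (0:ℝ≥0∞)) v
    have hsge : 0 ≤ Real.sin (2 * π * v) := by
      apply Real.sin_nonneg_of_nonneg_of_le_pi
      · nlinarith [hv.1]
      · nlinarith [hv.2]
    have : ¬ (0 < x * Real.sin (2 * π * v)) :=
      not_lt.mpr (mul_nonpos_iff.mpr (Or.inr ⟨hx'.le, hsge⟩))
    simp [G, this]
  rw [hzero, zero_add]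
  have hbound : ∀ t : ℝ, w t ∈ Set.Ioo (1/2:ℝ) 1 := by
    intro t
    have h1 : Real.arctan (m * t) < π / 2 := Real.arctan_lt_pi_div_two _
    have h2 : -(π / 2) < Real.arctan (m * t) := Real.neg_pi_div_two_lt_arctan _
    constructor
    · show 1/2 < 3/4 - Real.arctan (m * t) / (2 * π)
      have h3 : Real.arctan (m * t) / (2 * π) < 1/4 := by
        rw [div_lt_iff₀ Real.two_pi_pos]
        nlinarith
      linarith
    · show 3/4 - Real.arctan (m * t) / (2 * π) < 1
      have h3 : -(1/4 : ℝ) < Real.arctan (m * t) / (2 * π) := by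
        rw [lt_div_iff₀ Real.two_pi_pos]
        nlinarith
      linarith
  have himg : w '' Set.univ = Set.Ioo (1/2:ℝ) 1 := by
    ext v
    constructor
    · rintro ⟨t, -, rfl⟩
      exact hbound t
    · intro hv
      have hsin : Real.sin (2 * π * v) < 0 := by
        have h1 : Real.sin (2 * π * v - π) = -Real.sin (2 * π * v) := Real.sin_sub_pi _
        have h2 : 0 < Real.sin (2 * π * v - π) := by
          apply Real.sin_pos_of_pos_of_lt_pi
          · nlinarith [hv.1]
          · nlinarith [hv.2]
        linarith [h1 ▸ h2]
      refine ⟨x * (Real.cos (2 * π * v) / Real.sin (2 * π * v)) / Real.sqrt a, trivial, ?_⟩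
      have hmt : m * (x * (Real.cos (2 * π * v) / Real.sin (2 * π * v)) / Real.sqrt a)
          = Real.cos (2 * π * v) / Real.sin (2 * π * v) := by
        rw [hm]
        field_simp [hx, hsin.ne]
      show 3/4 - Real.arctan (m * (x * (Real.cos (2 * π * v) / Real.sin (2 * π * v)) / Real.sqrt a)) / (2 * π) = v
      rw [hmt]
      have htan : Real.cos (2 * π * v) / Real.sin (2 * π * v)
          = Real.tan (3 * π / 2 - 2 * π * v) := by
        rw [show 3 * π / 2 - 2 * π * v = (π / 2 - 2 * π * v) + π by ring, Real.tan_add_pi,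
          Real.tan_pi_div_two_sub, Real.tan_eq_sin_div_cos, inv_div]
      rw [htan, Real.arctan_tan (by nlinarith [hv.2]) (by nlinarith [hv.1])]
      field_simp
      ring
  have hinj : Set.InjOn w Set.univ := by
    intro t1 _ t2 _ h
    have h' : (3/4:ℝ) - Real.arctan (m * t1) / (2 * π)
        = 3/4 - Real.arctan (m * t2) / (2 * π) := h
    have h2 : Real.arctan (m * t1) = Real.arctan (m * t2) := by
      have h3 : Real.arctan (m * t1) / (2 * π) = Real.arctan (m * t2) / (2 * π) := by
        linarith
      field_simp at h3
      exact h3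
    exact mul_left_cancel₀ hm0 (Real.arctan_injective h2)
  have hder : ∀ t ∈ Set.univ, HasDerivWithinAt w (wd t) Set.univ t := by
    intro t _
    have h1 : HasDerivAt (fun t : ℝ => m * t) (m * 1) t := (hasDerivAt_id t).const_mul m
    have h2 := (Real.hasDerivAt_arctan (m * t)).comp t h1
    have h3 := (h2.div_const (2 * π)).const_sub (3/4 : ℝ)
    have h4 : -(1 / (1 + (m * t) ^ 2) * (m * 1) / (2 * π)) = wd t := by
      rw [hwd]; ring
    exact (h4 ▸ h3).hasDerivWithinAt
  rw [← himg, lint_image MeasurableSet.univ hder hinj, setLIntegral_univ]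
  have hpt : ∀ t : ℝ, ENNReal.ofReal (|wd t|) * ENNReal.ofReal (G a x (Real.sin (2 * π * w t)))
      = ENNReal.ofReal (Real.sqrt a / (2 * π) * (1 + x ^ 2 / a + t ^ 2) ^ (-(a / 2) - 1)) := by
    intro t
    have harg : 2 * π * w t = (π / 2 - Real.arctan (m * t)) + π := by
      rw [hw]
      show 2 * π * (3/4 - Real.arctan (m * t) / (2 * π)) = _
      field_simp
      ring
    rw [harg, Real.sin_add_pi, Real.sin_pi_div_two_sub, ← ENNReal.ofReal_mul (abs_nonneg _)]
    congr 1
    have h2 : 0 < x * -Real.cos (Real.arctan (m * t)) := by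
      have := Real.cos_arctan_pos (m * t)
      nlinarith
    have h1 : (-Real.cos (Real.arctan (m * t))) ^ 2 = 1 / (1 + (m * t) ^ 2) := by
      rw [neg_sq]
      exact Real.cos_sq_arctan _
    exact Gprod a ha x hx t _ h2 h1
  simp only [hpt]
  simp only [ENNReal.ofReal_mul (by positivity : (0:ℝ) ≤ Real.sqrt a / (2 * π))]
  rw [lintegral_const_mul' _ _ ENNReal.ofReal_ne_top]

lemma const_alg (a : ℝ) (ha : 0 < a) (c : ℝ) (hc : 0 < c) :
    Real.sqrt a / (2 * π) * (Real.sqrt c * c ^ (-(a/2) - 1) *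
        (Real.Gamma ((a+1)/2) * Real.Gamma (1/2) / Real.Gamma (a/2 + 1)))
      = 1 / ((Real.Gamma (a / 2) * Real.Gamma (1 / 2) / Real.Gamma (a / 2 + 1 / 2)) *
          Real.sqrt a * c ^ ((a + 1) / 2)) := by
  have h1 : Real.Gamma (1/2 : ℝ) = Real.sqrt π := Real.Gamma_one_half_eq
  have h2 : Real.Gamma (a/2 + 1) = (a/2) * Real.Gamma (a/2) :=
    Real.Gamma_add_one (by positivity : (a:ℝ)/2 ≠ 0)
  have h3 : (a+1)/2 = a/2 + 1/2 := by ring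
  have hcK : Real.sqrt c * c ^ (-(a/2) - 1) = (c ^ ((a + 1) / 2))⁻¹ := by
    rw [Real.sqrt_eq_rpow, ← Real.rpow_add hc, ← Real.rpow_neg hc.le]
    congr 1
    ring
  rw [h3, hcK, h1, h2]
  have hG1 : (0:ℝ) < Real.Gamma (a/2 + 1/2) := Real.Gamma_pos_of_pos (by positivity)
  have hG2 : (0:ℝ) < Real.Gamma (a/2) := Real.Gamma_pos_of_pos (by positivity)
  have hK : (0:ℝ) < c ^ ((a+1)/2) := Real.rpow_pos_of_pos hc _
  have hsa : (0:ℝ) < Real.sqrt a := Real.sqrt_pos.mpr ha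
  have hsp : (0:ℝ) < Real.sqrt π := Real.sqrt_pos.mpr Real.pi_pos
  have hA : Real.sqrt a * Real.sqrt a = a := Real.mul_self_sqrt ha.le
  have hP : Real.sqrt π * Real.sqrt π = π := Real.mul_self_sqrt Real.pi_pos.le
  rw [h3] at hK
  field_simp
  ring_nf
  rw [Real.sq_sqrt ha.le, Real.sq_sqrt Real.pi_pos.le]
  ring

lemma Hval (a : ℝ) (ha : 0 < a) (x : ℝ) (hx : x ≠ 0) :
    ∫⁻ v in Set.Ioo (0:ℝ) 1, ENNReal.ofReal (G a x (Real.sin (2 * π * v)))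
      = ENNReal.ofReal
        (1 / ((Real.Gamma (a / 2) * Real.Gamma (1 / 2) / Real.Gamma (a / 2 + 1 / 2)) *
          Real.sqrt a * (1 + x ^ 2 / a) ^ ((a + 1) / 2))) := by
  have hc : (0:ℝ) < 1 + x ^ 2 / a := by positivity
  have hmain : ∫⁻ v in Set.Ioo (0:ℝ) 1, ENNReal.ofReal (G a x (Real.sin (2 * π * v)))
      = ENNReal.ofReal (Real.sqrt a / (2 * π))
        * ∫⁻ t : ℝ, ENNReal.ofReal ((1 + x ^ 2 / a + t ^ 2) ^ (-(a / 2) - 1)) := by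
    rcases hx.lt_or_gt with h | h
    · exact Hval_neg a ha x h
    · exact Hval_pos a ha x h
  rw [hmain, lint_c_add_sq a ha (1 + x ^ 2 / a) hc,
    ← ENNReal.ofReal_mul (by positivity), const_alg a ha _ hc]

lemma sin_ne (v : ℝ) (hv : v ∈ Set.Ioo (0:ℝ) 1) (hne : v ≠ 1/2) :
    Real.sin (2 * π * v) ≠ 0 := by
  intro h
  rw [Real.sin_eq_zero_iff] at h
  obtain ⟨n, hn⟩ := h
  have hπ := Real.pi_pos
  have hv' : (n:ℝ) = 2 * v := by
    have h2 : (n:ℝ) * π = (2 * v) * π := by linarith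
    exact mul_right_cancel₀ Real.pi_ne_zero h2
  have h0 : (0:ℝ) < (n:ℝ) := by rw [hv']; linarith [hv.1]
  have h2 : (n:ℝ) < 2 := by rw [hv']; linarith [hv.2]
  have h0' : 0 < n := by exact_mod_cast h0
  have h2' : n < 2 := by exact_mod_cast h2
  have hn1 : n = 1 := by omega
  apply hne
  rw [hn1] at hv'
  push_cast at hv'
  linarith

end Stmt19

open Stmt19 in
/-- Bailey's polar method: for `a > 0`, the pushforward of the
uniform measure on `(0,1)²` under
`(u, u') ↦ √a·sin(2πu')·√(u^{−2/a} − 1)`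
is the Student-t(a) distribution, with density
`x ↦ 1/(B(a/2, 1/2)·√a·(1 + x²/a)^((a+1)/2))`, where
`B(p,q) = Γ(p)Γ(q)/Γ(p+q)`. -/
theorem stmt19 (a : ℝ) (ha : 0 < a) :
    Measure.map
      (fun p : ℝ × ℝ =>
        Real.sqrt a * Real.sin (2 * π * p.2) * Real.sqrt (p.1 ^ (-2 / a) - 1))
      ((volume : Measure (ℝ × ℝ)).restrict (Set.Ioo (0 : ℝ) 1 ×ˢ Set.Ioo (0 : ℝ) 1)) =
    volume.withDensity (fun x : ℝ =>
      ENNReal.ofReal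
        (1 / ((Real.Gamma (a / 2) * Real.Gamma (1 / 2) / Real.Gamma (a / 2 + 1 / 2)) *
          Real.sqrt a * (1 + x ^ 2 / a) ^ ((a + 1) / 2)))) := by
  set T : ℝ × ℝ → ℝ := fun p =>
    Real.sqrt a * Real.sin (2 * π * p.2) * Real.sqrt (p.1 ^ (-2 / a) - 1) with hTdef
  set dens : ℝ → ℝ := fun x =>
    1 / ((Real.Gamma (a / 2) * Real.Gamma (1 / 2) / Real.Gamma (a / 2 + 1 / 2)) *
      Real.sqrt a * (1 + x ^ 2 / a) ^ ((a + 1) / 2)) with hdens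
  have hT : Measurable T := by
    rw [hTdef]; fun_prop
  have hGm : Measurable (fun q : ℝ × ℝ => G a q.1 q.2) := by
    unfold G
    apply Measurable.ite
    · exact measurableSet_lt measurable_const (measurable_fst.mul measurable_snd)
    · fun_prop
    · exact measurable_const
  refine Measure.ext fun A hA => ?_
  rw [Measure.map_apply hT hA, withDensity_apply _ hA]
  have hpre : MeasurableSet (T ⁻¹' A) := hT hA
  rw [← lintegral_indicator_one hpre, Measure.volume_eq_prod, ← Measure.prod_restrict,
    lintegral_prod_symm _ ((measurable_one.indicator hpre).aemeasurable)]
  have step1 : ∫⁻ v in Set.Ioo (0:ℝ) 1, ∫⁻ u in Set.Ioo (0:ℝ) 1,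
        (T ⁻¹' A).indicator 1 (u, v)
      = ∫⁻ v in Set.Ioo (0:ℝ) 1, ∫⁻ x,
          ENNReal.ofReal (G a x (Real.sin (2 * π * v))) * A.indicator 1 x := by
    apply lintegral_congr_ae
    have h0 : ∀ᵐ v ∂(volume.restrict (Set.Ioo (0:ℝ) 1)), v ≠ (1/2 : ℝ) := by
      apply ae_restrict_of_ae
      rw [ae_iff]
      have : {v : ℝ | ¬ v ≠ (1/2:ℝ)} = {(1/2:ℝ)} := by ext v; simp
      rw [this]
      exact measure_singleton _
    filter_upwards [h0, ae_restrict_mem measurableSet_Ioo] with v hne hmem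
    have hs : Real.sin (2 * π * v) ≠ 0 := sin_ne v hmem hne
    have hind : ∀ u : ℝ, (T ⁻¹' A).indicator 1 (u, v)
        = A.indicator (1 : ℝ → ℝ≥0∞) (Real.sqrt a * Real.sin (2 * π * v)
            * Real.sqrt (u ^ (-2 / a) - 1)) := by
      intro u
      rfl
    rw [lintegral_congr hind]
    exact inner1 a ha _ hs (fun x => A.indicator 1 x)
  rw [step1]
  have hmeas : AEMeasurable (fun z : ℝ × ℝ =>
      ENNReal.ofReal (G a z.2 (Real.sin (2 * π * z.1))) * A.indicator 1 z.2)
      ((volume.restrict (Set.Ioo (0:ℝ) 1)).prod volume) := by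
    apply Measurable.aemeasurable
    apply Measurable.mul
    · exact (hGm.comp ((measurable_snd).prodMk
        (Real.measurable_sin.comp (measurable_const.mul measurable_fst)))).ennreal_ofReal
    · exact (measurable_one.indicator hA).comp measurable_snd
  rw [show (∫⁻ v in Set.Ioo (0:ℝ) 1, ∫⁻ x,
      ENNReal.ofReal (G a x (Real.sin (2 * π * v))) * A.indicator 1 x)
      = ∫⁻ x, ∫⁻ v in Set.Ioo (0:ℝ) 1,
        ENNReal.ofReal (G a x (Real.sin (2 * π * v))) * A.indicator 1 x
      from lintegral_lintegral_swap hmeas]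
  have step2 : ∀ᵐ x ∂(volume : Measure ℝ),
      (∫⁻ v in Set.Ioo (0:ℝ) 1,
        ENNReal.ofReal (G a x (Real.sin (2 * π * v))) * A.indicator 1 x)
      = A.indicator (fun x => ENNReal.ofReal (dens x)) x := by
    have h0 : ∀ᵐ x ∂(volume : Measure ℝ), x ≠ (0:ℝ) := by
      rw [ae_iff]
      have : {x : ℝ | ¬ x ≠ (0:ℝ)} = {(0:ℝ)} := by ext x; simp
      rw [this]
      exact measure_singleton _
    filter_upwards [h0] with x hx
    rw [lintegral_mul_const' _ _ (by by_cases h : x ∈ A <;> simp [h] :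
        A.indicator (1 : ℝ → ℝ≥0∞) x ≠ ⊤), Hval a ha x hx]
    by_cases h : x ∈ A
    · simp [h, hdens]
    · simp [h]
  rw [lintegral_congr_ae step2, lintegral_indicator hA]
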